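/- Let f : ℝ → ℝ be four times continuously differentiable on a neighborhood of 0. Then, as h → 0, [f(h/2) + (h/8)(f′(0) − f′(h))] − (1/2)[(f(0) + (h/2)f′(0)) + (f(h) − (h/2)f′(h))] = O(h⁴). -/

import Mathlib

open Asymptotics

/-- MVT step: if `φ 0 = 0` and `φ' = O(h^k)` near `0`, then `φ = O(h^(k+1))`. -/
lemma stepA {φ ψ : ℝ → ℝ} {u : Set ℝ} (hu : IsOpen u) (h0 : (0:ℝ) ∈ u)
    (hd : ∀ x ∈ u, HasDerivAt φ (ψ x) x) (hφ0 : φ 0 = 0) {k : ℕ}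
    (hψ : ψ =O[nhds 0] fun h => h^k) :
    φ =O[nhds 0] fun h => h^(k+1) := by
  obtain ⟨C, hC0, hC⟩ := hψ.exists_nonneg
  rw [Asymptotics.isBigOWith_iff] at hC
  have hmem : u ∩ {x | ‖ψ x‖ ≤ C * ‖x ^ k‖} ∈ nhds (0:ℝ) :=
    Filter.inter_mem (hu.mem_nhds h0) hC
  obtain ⟨ε, hε, hball⟩ := Metric.mem_nhds_iff.mp hmem
  rw [Asymptotics.isBigO_iff]
  refine ⟨C, Filter.eventually_iff_exists_mem.mpr ⟨Metric.ball 0 ε,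
    Metric.ball_mem_nhds 0 hε, fun h hh => ?_⟩⟩
  -- the segment from 0 to h
  set t : Set ℝ := Set.uIcc 0 h with ht
  have hsub : t ⊆ Metric.ball 0 ε := by
    intro x hx
    rcases Set.mem_uIcc.mp hx with ⟨h1, h2⟩ | ⟨h1, h2⟩
    · simp only [Metric.mem_ball, Real.dist_eq, sub_zero]
      rw [abs_of_nonneg h1]
      calc x ≤ h := h2
        _ ≤ |h| := le_abs_self h
        _ < ε := by simpa [Real.dist_eq] using hh
    · simp only [Metric.mem_ball, Real.dist_eq, sub_zero]
      rw [abs_of_nonpos h2]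
      calc -x ≤ -h := by linarith
        _ ≤ |h| := neg_le_abs h
        _ < ε := by simpa [Real.dist_eq] using hh
  have habs : ∀ x ∈ t, |x| ≤ |h| := by
    intro x hx
    rcases Set.mem_uIcc.mp hx with ⟨h1, h2⟩ | ⟨h1, h2⟩
    · rw [abs_of_nonneg h1]; exact h2.trans (le_abs_self h)
    · rw [abs_of_nonpos h2]; exact (by linarith : -x ≤ -h).trans (neg_le_abs h)
  have hder : ∀ x ∈ t, HasDerivWithinAt φ (ψ x) t x := fun x hx =>
    (hd x (hball (hsub hx)).1).hasDerivWithinAt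
  have hbound : ∀ x ∈ t, ‖ψ x‖ ≤ C * |h|^k := by
    intro x hx
    have h1 : ‖ψ x‖ ≤ C * ‖x ^ k‖ := (hball (hsub hx)).2
    refine h1.trans ?_
    have : ‖x ^ k‖ ≤ |h| ^ k := by
      rw [Real.norm_eq_abs, abs_pow]
      exact pow_le_pow_left₀ (abs_nonneg x) (habs x hx) k
    nlinarith [pow_nonneg (abs_nonneg h) k]
  have hmvt := Convex.norm_image_sub_le_of_norm_hasDerivWithin_le hder hbound
    (convex_uIcc 0 h) (Set.left_mem_uIcc) (Set.right_mem_uIcc)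
  rw [hφ0, sub_zero, sub_zero] at hmvt
  calc ‖φ h‖ ≤ C * |h|^k * ‖h‖ := hmvt
    _ = C * ‖h ^ (k+1)‖ := by
        rw [Real.norm_eq_abs, Real.norm_eq_abs, abs_pow, pow_succ]; ring

/-- For `f` four times continuously differentiable on a neighborhood of 0, the
flux-correction form (with `C = 1/4`) differs from the flux-average form only at
fourth order in `h` as `h → 0`. -/
theorem stmt_10 (f : ℝ → ℝ) (s : Set ℝ) (hs : s ∈ nhds (0 : ℝ))
    (hf : ContDiffOn ℝ 4 f s) :
    (fun h : ℝ =>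
        (f (h/2) + (h/8) * (deriv f 0 - deriv f h))
          - (1/2) * ((f 0 + (h/2) * deriv f 0) + (f h - (h/2) * deriv f h)))
      =O[nhds 0] fun h : ℝ => h^4 := by
  -- work on the open interior
  set u : Set ℝ := interior s with hu_def
  have hu : IsOpen u := isOpen_interior
  have h0u : (0:ℝ) ∈ u := mem_interior_iff_mem_nhds.mpr hs
  have hfu : ContDiffOn ℝ 4 f u := hf.mono interior_subset
  set g1 : ℝ → ℝ := deriv f with hg1
  set g2 : ℝ → ℝ := deriv g1 with hg2
  set g3 : ℝ → ℝ := deriv g2 with hg3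
  set g4 : ℝ → ℝ := deriv g3 with hg4
  have hg1u : ContDiffOn ℝ 3 g1 u := hfu.deriv_of_isOpen hu (by norm_num)
  have hg2u : ContDiffOn ℝ 2 g2 u := hg1u.deriv_of_isOpen hu (by norm_num)
  have hg3u : ContDiffOn ℝ 1 g3 u := hg2u.deriv_of_isOpen hu (by norm_num)
  have hg4u : ContDiffOn ℝ 0 g4 u := hg3u.deriv_of_isOpen hu (by norm_num)
  -- derivative facts
  have hdf : ∀ x ∈ u, HasDerivAt f (g1 x) x := fun x hx =>
    ((hfu.differentiableOn (by norm_num) x hx).differentiableAt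
      (hu.mem_nhds hx)).hasDerivAt
  have hdg1 : ∀ x ∈ u, HasDerivAt g1 (g2 x) x := fun x hx =>
    ((hg1u.differentiableOn (by norm_num) x hx).differentiableAt
      (hu.mem_nhds hx)).hasDerivAt
  have hdg2 : ∀ x ∈ u, HasDerivAt g2 (g3 x) x := fun x hx =>
    ((hg2u.differentiableOn (by norm_num) x hx).differentiableAt
      (hu.mem_nhds hx)).hasDerivAt
  have hdg3 : ∀ x ∈ u, HasDerivAt g3 (g4 x) x := fun x hx =>
    ((hg3u.differentiableOn (by norm_num) x hx).differentiableAt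
      (hu.mem_nhds hx)).hasDerivAt
  -- g4 is O(1)
  have hg4cont : ContinuousAt g4 0 :=
    (hg4u.continuousOn.continuousAt (hu.mem_nhds h0u))
  have hO0 : g4 =O[nhds 0] (fun h : ℝ => h ^ 0) := by
    simpa using (hg4cont.tendsto.isBigO_one ℝ)
  -- remainders
  set S : ℝ → ℝ := fun h => g3 h - g3 0 with hS
  set T : ℝ → ℝ := fun h => g2 h - g2 0 - g3 0 * h with hT
  set Q : ℝ → ℝ := fun h => g1 h - g1 0 - g2 0 * h - g3 0 * (h^2/2) with hQ
  set R : ℝ → ℝ := fun h => f h - f 0 - g1 0 * h - g2 0 * (h^2/2) - g3 0 * (h^3/6)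
    with hR
  have hOS : S =O[nhds 0] fun h => h ^ 1 := by
    refine stepA hu h0u (fun x hx => ?_) (by simp [hS]) hO0
    exact (hdg3 x hx).sub_const (g3 0)
  have hOT : T =O[nhds 0] fun h => h ^ 2 := by
    refine stepA hu h0u (fun x hx => ?_) (by simp [hT]) hOS
    have := ((hdg2 x hx).sub_const (g2 0)).sub ((hasDerivAt_id x).const_mul (g3 0))
    simpa [hS, hT, mul_comm, Pi.sub_def] using this
  have hOQ : Q =O[nhds 0] fun h => h ^ 3 := by
    refine stepA hu h0u (fun x hx => ?_) (by simp [hQ]) hOT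
    have h2 : HasDerivAt (fun h : ℝ => g3 0 * (h^2/2)) (g3 0 * x) x := by
      have := ((hasDerivAt_pow 2 x).div_const 2).const_mul (g3 0)
      simpa [mul_comm, mul_assoc] using this
    have := (((hdg1 x hx).sub_const (g1 0)).sub
      ((hasDerivAt_id x).const_mul (g2 0))).sub h2
    simpa [hQ, hT, mul_comm, Pi.sub_def] using this
  have hOR : R =O[nhds 0] fun h => h ^ 4 := by
    refine stepA hu h0u (fun x hx => ?_) (by simp [hR]) hOQ
    have h3 : HasDerivAt (fun h : ℝ => g3 0 * (h^3/6)) (g3 0 * (x^2/2)) x := by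
      have := ((hasDerivAt_pow 3 x).div_const 6).const_mul (g3 0)
      refine this.congr_deriv ?_
      push_cast
      ring
    have h2 : HasDerivAt (fun h : ℝ => g2 0 * (h^2/2)) (g2 0 * x) x := by
      have := ((hasDerivAt_pow 2 x).div_const 2).const_mul (g2 0)
      simpa [mul_comm, mul_assoc] using this
    have := ((((hdf x hx).sub_const (f 0)).sub
      ((hasDerivAt_id x).const_mul (g1 0))).sub h2).sub h3
    simpa [hR, hQ, mul_comm, Pi.sub_def] using this
  -- assemble
  have hhalf : Filter.Tendsto (fun h : ℝ => h / 2) (nhds 0) (nhds 0) := by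
    simpa using (continuous_id.div_const 2).tendsto (0:ℝ)
  have hR2 : (fun h : ℝ => R (h/2)) =O[nhds 0] fun h => h ^ 4 := by
    have h1 : (fun h : ℝ => R (h/2)) =O[nhds 0] fun h => (h/2) ^ 4 :=
      hOR.comp_tendsto hhalf
    refine h1.trans (Asymptotics.isBigO_iff.mpr ⟨1, ?_⟩)
    filter_upwards with h
    rw [Real.norm_eq_abs, Real.norm_eq_abs, abs_pow, abs_pow, one_mul]
    have : |h/2| ≤ |h| := by
      rw [abs_div, abs_two]; linarith [abs_nonneg h]
    exact pow_le_pow_left₀ (abs_nonneg _) this 4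
  have hQ2 : (fun h : ℝ => (h/8) * Q h) =O[nhds 0] fun h => h ^ 4 := by
    have h1 : (fun h : ℝ => h/8) =O[nhds 0] fun h : ℝ => h := by
      refine Asymptotics.isBigO_iff.mpr ⟨1, ?_⟩
      filter_upwards with h
      rw [Real.norm_eq_abs, Real.norm_eq_abs, one_mul, abs_div,
        abs_of_nonneg (by norm_num : (0:ℝ) ≤ 8)]
      linarith [abs_nonneg h]
    have := h1.mul hOQ
    simpa [pow_succ, mul_comm, mul_assoc, mul_left_comm] using this
  have key : (fun h : ℝ =>
        (f (h/2) + (h/8) * (deriv f 0 - deriv f h))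
          - (1/2) * ((f 0 + (h/2) * deriv f 0) + (f h - (h/2) * deriv f h)))
      = fun h : ℝ => R (h/2) - (1/2) * R h + (h/8) * Q h := by
    funext h
    simp only [hR, hQ, ← hg1]
    ring
  rw [key]
  exact (hR2.sub (hOR.const_mul_left (1/2))).add hQ2
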